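/- Stallings' theorem: let f : G₁ → G₂ be a group homomorphism inducing an isomorphism on H₁(−;ℤ) and an epimorphism on H₂(−;ℤ). Then for all i ≥ 1, f induces an isomorphism G₁/Γ^{i+1}G₁ ≅ G₂/Γ^{i+1}G₂. In particular, if G₁ and G₂ are nilpotent, f is an isomorphism. -/

import Mathlib

noncomputable section

/-- The canonical free presentation `FreeGroup G → G` of a group `G`. -/
def freePres (G : Type*) [Group G] : FreeGroup G →* G := FreeGroup.lift id

theorem freePres_naturality {G₁ G₂ : Type*} [Group G₁] [Group G₂] (f : G₁ →* G₂) :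
    (freePres G₂).comp (FreeGroup.map f) = f.comp (freePres G₁) := by
  ext x
  simp [freePres]

theorem freeMap_ker_le {G₁ G₂ : Type*} [Group G₁] [Group G₂] (f : G₁ →* G₂) :
    (freePres G₁).ker.map (FreeGroup.map f) ≤ (freePres G₂).ker := by
  intro y hy
  obtain ⟨z, hz, rfl⟩ := Subgroup.mem_map.mp hy
  rw [MonoidHom.mem_ker, ← MonoidHom.comp_apply, freePres_naturality,
    MonoidHom.comp_apply, MonoidHom.mem_ker.mp hz, map_one]

/-- Hopf's formula model for the second integral group homology `H₂(G;ℤ)`: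
for the canonical free presentation `1 → R → F → G → 1` with `F = FreeGroup G`,
`H₂(G;ℤ) ≅ (R ⊓ [F,F]) / [F,R]`. -/
abbrev SchurH2 (G : Type*) [Group G] : Type _ :=
  ↥((freePres G).ker ⊓ commutator (FreeGroup G)) ⧸
    ((⁅(freePres G).ker, (⊤ : Subgroup (FreeGroup G))⁆).subgroupOf
      ((freePres G).ker ⊓ commutator (FreeGroup G)))

theorem freeMap_mem {G₁ G₂ : Type*} [Group G₁] [Group G₂] (f : G₁ →* G₂)
    (x : ↥((freePres G₁).ker ⊓ commutator (FreeGroup G₁))) :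
    FreeGroup.map f x.1 ∈ (freePres G₂).ker ⊓ commutator (FreeGroup G₂) := by
  have hk := (Subgroup.mem_inf.mp x.2).1
  have hc := (Subgroup.mem_inf.mp x.2).2
  refine Subgroup.mem_inf.mpr ⟨?_, ?_⟩
  · exact freeMap_ker_le f (Subgroup.mem_map.mpr ⟨x.1, hk, rfl⟩)
  · have hle : (commutator (FreeGroup G₁)).map (FreeGroup.map f) ≤
        commutator (FreeGroup G₂) := by
      rw [commutator_def, Subgroup.map_commutator, commutator_def]
      exact Subgroup.commutator_mono le_top le_top
    exact hle (Subgroup.mem_map.mpr ⟨x.1, hc, rfl⟩)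

/-- The map induced by a group homomorphism on Hopf-formula `H₂`. -/
def SchurH2map {G₁ G₂ : Type*} [Group G₁] [Group G₂] (f : G₁ →* G₂) :
    SchurH2 G₁ →* SchurH2 G₂ :=
  QuotientGroup.map _ _
    (((FreeGroup.map f).domRestrict ((freePres G₁).ker ⊓ commutator (FreeGroup G₁))).codRestrict
      ((freePres G₂).ker ⊓ commutator (FreeGroup G₂)) (freeMap_mem f))
    (by
      intro x hx
      simp only [Subgroup.mem_subgroupOf, Subgroup.mem_comap] at hx ⊢
      have hle : (⁅(freePres G₁).ker, (⊤ : Subgroup (FreeGroup G₁))⁆).map (FreeGroup.map f) ≤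
          ⁅(freePres G₂).ker, (⊤ : Subgroup (FreeGroup G₂))⁆ := by
        rw [Subgroup.map_commutator]
        exact Subgroup.commutator_mono (freeMap_ker_le f) le_top
      exact hle (Subgroup.mem_map.mpr ⟨x.1, hx, rfl⟩))

/-- The coinvariants `N/[N,G]` of a normal subgroup `N ⊴ G`. -/
abbrev Coinv (G : Type*) [Group G] (N : Subgroup G) [N.Normal] : Type _ :=
  N ⧸ ((⁅N, (⊤ : Subgroup G)⁆).subgroupOf N)

/-- The canonical map `N/[N,G] → H₁(G;ℤ) = Gᵃᵇ`. -/
def coinvToAb (G : Type*) [Group G] (N : Subgroup G) [N.Normal] :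
    Coinv G N →* Abelianization G :=
  QuotientGroup.lift _ ((Abelianization.of (G := G)).comp N.subtype)
    (by
      intro x hx
      rw [Subgroup.mem_subgroupOf] at hx
      have hmem : (x : G) ∈ commutator G := Subgroup.commutator_mono le_top le_top hx
      exact (QuotientGroup.eq_one_iff _).mpr hmem)

/-- The map on coinvariants induced by a morphism of pairs `(G, N) → (G', N')`. -/
def coinvMap {G G' : Type*} [Group G] [Group G'] (f : G →* G') (N : Subgroup G)
    (N' : Subgroup G') [N.Normal] [N'.Normal] (hf : ∀ n ∈ N, f n ∈ N') :
    Coinv G N →* Coinv G' N' :=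
  QuotientGroup.map _ _ ((f.domRestrict N).codRestrict N' (fun x => hf x.1 x.2))
    (by
      intro x hx
      simp only [Subgroup.mem_subgroupOf, Subgroup.mem_comap] at hx ⊢
      have hle : (⁅N, (⊤ : Subgroup G)⁆).map f ≤ ⁅N', (⊤ : Subgroup G')⁆ := by
        rw [Subgroup.map_commutator]
        refine Subgroup.commutator_mono ?_ le_top
        intro y hy
        obtain ⟨z, hz, rfl⟩ := Subgroup.mem_map.mp hy
        exact hf z hz
      exact hle (Subgroup.mem_map.mpr ⟨x.1, hx, rfl⟩))


/-- The map induced by `f : G₁ →* G₂` on the quotients by the lower central series.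
(Mathlib's `lowerCentralSeries G r` is the paper's `Γ^{r+1}G`.) -/
def lcsQuotMap {G₁ G₂ : Type*} [Group G₁] [Group G₂] (f : G₁ →* G₂) (r : ℕ) :
    G₁ ⧸ (⊤ : Subgroup G₁).lowerCentralSeries r →* G₂ ⧸ (⊤ : Subgroup G₂).lowerCentralSeries r :=
  QuotientGroup.map _ _ f
    (Subgroup.map_le_iff_le_comap.mp (Subgroup.lowerCentralSeries.map f r))

/-! ### Auxiliary development for Stallings' theorem -/

open scoped commutatorElement

section StallingsAux

/-- In any group, if `b⁻¹ * a` lies in a central subgroup `Z`, then so does `b * a⁻¹`. -/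
theorem stallings_inv_aux {H : Type*} [Group H] (Z : Subgroup H)
    (hZ : ∀ z ∈ Z, ∀ h : H, z * h = h * z) {a b : H} (h : b⁻¹ * a ∈ Z) :
    b * a⁻¹ ∈ Z := by
  have h1 := hZ _ h b
  rw [mul_inv_cancel_left] at h1
  have key : b * a⁻¹ = (b⁻¹ * a)⁻¹ := by
    nth_rewrite 1 [← h1]
    group
  rw [key]
  exact Z.inv_mem h

theorem stallings_mul_aux {H : Type*} [Group H] (Z : Subgroup H)
    (hZ : ∀ z ∈ Z, ∀ h : H, z * h = h * z) {a b c d : H}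
    (ha : b⁻¹ * a ∈ Z) (hc : d⁻¹ * c ∈ Z) : (b * d)⁻¹ * (a * c) ∈ Z := by
  have h1 := hZ _ ha d⁻¹
  have key : (b * d)⁻¹ * (a * c) = d⁻¹ * (b⁻¹ * a) * d * (d⁻¹ * c) := by group
  rw [key, ← h1]
  have key2 : b⁻¹ * a * d⁻¹ * d * (d⁻¹ * c) = (b⁻¹ * a) * (d⁻¹ * c) := by group
  rw [key2]
  exact Z.mul_mem ha hc

/-- Central agreement: two homomorphisms out of a free group which agree modulo a
central subgroup on generators agree on the commutator subgroup. -/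
theorem stallings_central_agree {X H : Type*} [Group H] (α β : FreeGroup X →* H)
    (Z : Subgroup H) (hZ : ∀ z ∈ Z, ∀ h : H, z * h = h * z)
    (hgen : ∀ x : X, (β (FreeGroup.of x))⁻¹ * α (FreeGroup.of x) ∈ Z) :
    ∀ w ∈ commutator (FreeGroup X), α w = β w := by
  have hmem : ∀ w : FreeGroup X, (β w)⁻¹ * α w ∈ Z := by
    intro w
    induction w using FreeGroup.induction_on with
    | C1 => simpa using Z.one_mem
    | of x => exact hgen x
    | inv_of x hx =>
      rw [map_inv, map_inv, inv_inv]
      exact stallings_inv_aux Z hZ hx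
    | mul x y hx hy =>
      rw [map_mul, map_mul]
      exact stallings_mul_aux Z hZ hx hy
  have cmul : ∀ x y : FreeGroup X,
      (β (x * y))⁻¹ * α (x * y) = ((β x)⁻¹ * α x) * ((β y)⁻¹ * α y) := by
    intro x y
    have h1 := hZ _ (hmem x) ((β y)⁻¹)
    rw [map_mul, map_mul]
    calc (β x * β y)⁻¹ * (α x * α y)
        = (β y)⁻¹ * ((β x)⁻¹ * α x) * (β y) * ((β y)⁻¹ * α y) := by group
      _ = ((β x)⁻¹ * α x) * ((β y)⁻¹ * α y) := by rw [← h1]; group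
  have cone : (β (1 : FreeGroup X))⁻¹ * α 1 = 1 := by simp
  have cinv : ∀ x : FreeGroup X, (β x⁻¹)⁻¹ * α x⁻¹ = ((β x)⁻¹ * α x)⁻¹ := by
    intro x
    have h := cmul x x⁻¹
    rw [mul_inv_cancel, cone] at h
    exact (inv_eq_of_mul_eq_one_right h.symm).symm
  have hcom : ∀ g h : FreeGroup X, α ⁅g, h⁆ = β ⁅g, h⁆ := by
    intro g h
    have e : (β ⁅g, h⁆)⁻¹ * α ⁅g, h⁆ = 1 := by
      rw [commutatorElement_def]
      rw [show g * h * g⁻¹ * h⁻¹ = (g * h) * (g⁻¹ * h⁻¹) from by group]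
      rw [cmul, cmul, cmul, cinv, cinv]
      have h1 := hZ _ (hmem g) ((β h)⁻¹ * α h)
      rw [h1]
      group
    have := inv_mul_eq_one.mp e
    exact this.symm
  intro w hw
  let K : Subgroup (FreeGroup X) :=
    { carrier := {w | α w = β w}
      one_mem' := by simp
      mul_mem' := by
        intro u v hu hv
        simp only [Set.mem_setOf_eq] at hu hv ⊢
        rw [map_mul, map_mul, hu, hv]
      inv_mem' := by
        intro u hu
        simp only [Set.mem_setOf_eq] at hu ⊢
        rw [map_inv, map_inv, hu] }
  have hle : commutator (FreeGroup X) ≤ K := by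
    rw [commutator_def, Subgroup.commutator_le]
    intro g _ h _
    exact hcom g h
  exact hle hw

/-- Two homomorphisms out of a free group agreeing mod `N` on generators agree
mod `⁅N, ⊤⁆` on the commutator subgroup. -/
theorem stallings_agree_mod {X G : Type*} [Group G] (N : Subgroup G) [N.Normal]
    (α β : FreeGroup X →* G)
    (hgen : ∀ x : X, (β (FreeGroup.of x))⁻¹ * α (FreeGroup.of x) ∈ N) :
    ∀ w ∈ commutator (FreeGroup X), (β w)⁻¹ * α w ∈ ⁅N, (⊤ : Subgroup G)⁆ := by
  have hcentral : ∀ z ∈ N.map (QuotientGroup.mk' ⁅N, (⊤ : Subgroup G)⁆),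
      ∀ h : G ⧸ ⁅N, (⊤ : Subgroup G)⁆, z * h = h * z := by
    rintro z ⟨n, hn, rfl⟩ h
    obtain ⟨g, rfl⟩ := QuotientGroup.mk'_surjective _ h
    rw [← map_mul, ← map_mul, QuotientGroup.mk'_apply, QuotientGroup.mk'_apply,
      QuotientGroup.eq]
    have hrw : (n * g)⁻¹ * (g * n) = ⁅n⁻¹, g⁻¹⁆⁻¹ := by
      rw [commutatorElement_def]; group
    rw [hrw]
    exact Subgroup.inv_mem _
      (Subgroup.commutator_mem_commutator (N.inv_mem hn) (Subgroup.mem_top _))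
  have key := stallings_central_agree
      ((QuotientGroup.mk' ⁅N, (⊤ : Subgroup G)⁆).comp α)
      ((QuotientGroup.mk' ⁅N, (⊤ : Subgroup G)⁆).comp β)
      (N.map (QuotientGroup.mk' ⁅N, (⊤ : Subgroup G)⁆)) hcentral
      (fun x => by
        rw [MonoidHom.comp_apply, MonoidHom.comp_apply, ← map_inv, ← map_mul]
        exact Subgroup.mem_map.mpr ⟨_, hgen x, rfl⟩)
  intro w hw
  have h1 := key w hw
  rw [MonoidHom.comp_apply, MonoidHom.comp_apply, QuotientGroup.mk'_apply,
    QuotientGroup.mk'_apply] at h1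
  exact QuotientGroup.eq.mp h1.symm

/-- The canonical (set-theoretic) lift `FreeGroup (G/N) →* G`. -/
def qlift (G : Type*) [Group G] (N : Subgroup G) [N.Normal] : FreeGroup (G ⧸ N) →* G :=
  FreeGroup.lift Quotient.out

theorem mk'_comp_qlift (G : Type*) [Group G] (N : Subgroup G) [N.Normal] :
    (QuotientGroup.mk' N).comp (qlift G N) = freePres (G ⧸ N) := by
  ext q
  simp [qlift, freePres, QuotientGroup.out_eq']

theorem qlift_mem_ker {G : Type*} [Group G] {N : Subgroup G} [N.Normal]
    {w : FreeGroup (G ⧸ N)} (hw : w ∈ (freePres (G ⧸ N)).ker) : qlift G N w ∈ N := by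
  have h : (QuotientGroup.mk' N) (qlift G N w) = 1 := by
    rw [← MonoidHom.comp_apply, mk'_comp_qlift]
    exact hw
  have h2 := MonoidHom.mem_ker.mpr h
  rwa [QuotientGroup.ker_mk'] at h2

/-- The Hopf-formula connecting map `H₂(G/N) → N/[N,G]`. -/
def hopfToCoinv (G : Type*) [Group G] (N : Subgroup G) [N.Normal] :
    SchurH2 (G ⧸ N) →* Coinv G N :=
  QuotientGroup.map _ _
    (((qlift G N).domRestrict
        ((freePres (G ⧸ N)).ker ⊓ commutator (FreeGroup (G ⧸ N)))).codRestrict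
      N (fun x => qlift_mem_ker (Subgroup.mem_inf.mp x.2).1))
    (by
      intro x hx
      simp only [Subgroup.mem_subgroupOf, Subgroup.mem_comap] at hx ⊢
      have hle : (⁅(freePres (G ⧸ N)).ker, (⊤ : Subgroup (FreeGroup (G ⧸ N)))⁆).map
          (qlift G N) ≤ ⁅N, (⊤ : Subgroup G)⁆ := by
        rw [Subgroup.map_commutator]
        refine Subgroup.commutator_mono ?_ le_top
        rintro y ⟨z, hz, rfl⟩
        exact qlift_mem_ker hz
      exact hle (Subgroup.mem_map.mpr ⟨x.1, hx, rfl⟩))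

theorem SchurH2map_mk {G₁ G₂ : Type*} [Group G₁] [Group G₂] (f : G₁ →* G₂)
    (v : ↥((freePres G₁).ker ⊓ commutator (FreeGroup G₁))) :
    SchurH2map f (QuotientGroup.mk v : SchurH2 G₁) =
      (QuotientGroup.mk (⟨FreeGroup.map f v.1, freeMap_mem f v⟩ :
        ↥((freePres G₂).ker ⊓ commutator (FreeGroup G₂))) : SchurH2 G₂) := rfl

theorem hopfToCoinv_mk (G : Type*) [Group G] (N : Subgroup G) [N.Normal]
    (w : ↥((freePres (G ⧸ N)).ker ⊓ commutator (FreeGroup (G ⧸ N)))) :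
    hopfToCoinv G N (QuotientGroup.mk w : SchurH2 (G ⧸ N)) =
      (QuotientGroup.mk (⟨qlift G N w.1, qlift_mem_ker (Subgroup.mem_inf.mp w.2).1⟩ : N) :
        Coinv G N) := rfl

theorem coinvMap_mk {G G' : Type*} [Group G] [Group G'] (f : G →* G') (N : Subgroup G)
    (N' : Subgroup G') [N.Normal] [N'.Normal] (hf : ∀ n ∈ N, f n ∈ N') (n : N) :
    coinvMap f N N' hf (QuotientGroup.mk n : Coinv G N) =
      (QuotientGroup.mk (⟨f n, hf n.1 n.2⟩ : N') : Coinv G' N') := rfl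

theorem coinvMap_mk' {G G' : Type*} [Group G] [Group G'] (f : G →* G') (N : Subgroup G)
    (N' : Subgroup G') [N.Normal] [N'.Normal] (hf : N ≤ N'.comap f) (n : N) :
    coinvMap f N N' (fun n hn => hf hn) (QuotientGroup.mk n : Coinv G N) =
      (QuotientGroup.mk (⟨f n, hf n.2⟩ : N') : Coinv G' N') := rfl

theorem freePres_surjective (G : Type*) [Group G] : Function.Surjective (freePres G) :=
  fun g => ⟨FreeGroup.of g, by simp [freePres]⟩

theorem freePres_comp_mu {G : Type*} [Group G] (N : Subgroup G) [N.Normal] :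
    (freePres G).comp (FreeGroup.map (Quotient.out : G ⧸ N → G)) = qlift G N := by
  ext q
  show freePres G (FreeGroup.map (Quotient.out : G ⧸ N → G) (FreeGroup.of q)) =
    qlift G N (FreeGroup.of q)
  rw [FreeGroup.map.of]
  show FreeGroup.lift id (FreeGroup.of (Quotient.out q)) =
    FreeGroup.lift (Quotient.out : G ⧸ N → G) (FreeGroup.of q)
  rw [FreeGroup.lift_apply_of, FreeGroup.lift_apply_of, id_eq]

theorem tau_comp_mu {G : Type*} [Group G] (N : Subgroup G) [N.Normal] :
    (FreeGroup.map (⇑(QuotientGroup.mk' N))).comp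
      (FreeGroup.map (Quotient.out : G ⧸ N → G)) = MonoidHom.id _ := by
  ext q
  show FreeGroup.map (⇑(QuotientGroup.mk' N))
      (FreeGroup.map (Quotient.out : G ⧸ N → G) (FreeGroup.of q)) =
    MonoidHom.id (FreeGroup (G ⧸ N)) (FreeGroup.of q)
  rw [FreeGroup.map.of, FreeGroup.map.of, MonoidHom.id_apply, QuotientGroup.mk'_apply,
    QuotientGroup.out_eq']

/-- The basic comparison: on commutator words, `qlift ∘ τ` agrees with the
presentation map modulo `⁅N, ⊤⁆`. -/
theorem qlift_tau_agree {G : Type*} [Group G] (N : Subgroup G) [N.Normal] :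
    ∀ w ∈ commutator (FreeGroup G),
      (freePres G w)⁻¹ * qlift G N (FreeGroup.map (⇑(QuotientGroup.mk' N)) w) ∈
        ⁅N, (⊤ : Subgroup G)⁆ := by
  have hgen : ∀ x : G,
      ((freePres G) (FreeGroup.of x))⁻¹ *
        ((qlift G N).comp (FreeGroup.map (⇑(QuotientGroup.mk' N)))) (FreeGroup.of x) ∈ N := by
    intro x
    have h1 : freePres G (FreeGroup.of x) = x := by simp [freePres]
    have h2 : ((qlift G N).comp (FreeGroup.map (⇑(QuotientGroup.mk' N)))) (FreeGroup.of x)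
        = (QuotientGroup.mk x : G ⧸ N).out := by
      simp [qlift, QuotientGroup.mk'_apply]
    rw [h1, h2]
    exact QuotientGroup.eq.mp (QuotientGroup.out_eq' (QuotientGroup.mk x : G ⧸ N)).symm
  have key := stallings_agree_mod N
      ((qlift G N).comp (FreeGroup.map (⇑(QuotientGroup.mk' N)))) (freePres G) hgen
  intro w hw
  simpa using key w hw

end StallingsAux
section StallingsExact

/-- Exactness: the composite `H₂(G) → H₂(G/N) → N/[N,G]` is trivial. -/
theorem hopf_comp_eq_one {G : Type*} [Group G] (N : Subgroup G) [N.Normal]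
    (x : SchurH2 G) :
    hopfToCoinv G N (SchurH2map (QuotientGroup.mk' N) x) = 1 := by
  obtain ⟨v, rfl⟩ := QuotientGroup.mk_surjective x
  rw [SchurH2map_mk, hopfToCoinv_mk]
  rw [QuotientGroup.eq_one_iff, Subgroup.mem_subgroupOf]
  have h1 := qlift_tau_agree N v.1 (Subgroup.mem_inf.mp v.2).2
  have h2 : freePres G v.1 = 1 := MonoidHom.mem_ker.mp (Subgroup.mem_inf.mp v.2).1
  rw [h2] at h1
  simpa using h1

/-- Exactness of `H₂(G/N) → N/[N,G] → H₁(G)` at `N/[N,G]`. -/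
theorem coinv_exact {G : Type*} [Group G] (N : Subgroup G) [N.Normal] (y : Coinv G N)
    (hy : coinvToAb G N y = 1) : ∃ x, hopfToCoinv G N x = y := by
  obtain ⟨n, rfl⟩ := QuotientGroup.mk_surjective y
  have hy' : Abelianization.of ((N.subtype) n) = 1 := by
    have := hy
    exact this
  have hn : (n : G) ∈ commutator G := (QuotientGroup.eq_one_iff _).mp hy'
  have hcomm : commutator G = Subgroup.map (freePres G) (commutator (FreeGroup G)) := by
    rw [commutator_def, commutator_def, Subgroup.map_commutator,
      Subgroup.map_top_of_surjective _ (freePres_surjective G)]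
  rw [hcomm] at hn
  obtain ⟨v, hv, hvn⟩ := Subgroup.mem_map.mp hn
  have hwk : FreeGroup.map (⇑(QuotientGroup.mk' N)) v ∈ (freePres (G ⧸ N)).ker := by
    rw [MonoidHom.mem_ker, ← MonoidHom.comp_apply, freePres_naturality,
      MonoidHom.comp_apply, hvn]
    exact (QuotientGroup.eq_one_iff _).mpr n.2
  have hwc : FreeGroup.map (⇑(QuotientGroup.mk' N)) v ∈ commutator (FreeGroup (G ⧸ N)) := by
    have hle : (commutator (FreeGroup G)).map (FreeGroup.map (⇑(QuotientGroup.mk' N))) ≤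
        commutator (FreeGroup (G ⧸ N)) := by
      rw [commutator_def, Subgroup.map_commutator, commutator_def]
      exact Subgroup.commutator_mono le_top le_top
    exact hle (Subgroup.mem_map.mpr ⟨v, hv, rfl⟩)
  refine ⟨QuotientGroup.mk ⟨_, Subgroup.mem_inf.mpr ⟨hwk, hwc⟩⟩, ?_⟩
  rw [hopfToCoinv_mk]
  rw [QuotientGroup.eq, Subgroup.mem_subgroupOf]
  simp only [MonoidHom.codRestrict_apply, MonoidHom.domRestrict_apply, Subgroup.coe_mul,
    InvMemClass.coe_inv]
  have h1 := qlift_tau_agree N v hv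
  rw [hvn] at h1
  have h2 : (qlift G N (FreeGroup.map (⇑(QuotientGroup.mk' N)) v))⁻¹ * (n : G) =
      ((n : G)⁻¹ * qlift G N (FreeGroup.map (⇑(QuotientGroup.mk' N)) v))⁻¹ := by group
  rw [h2]
  exact Subgroup.inv_mem _ h1

/-- Exactness of `H₂(G) → H₂(G/N) → N/[N,G]` at `H₂(G/N)`. -/
theorem schur_exact {G : Type*} [Group G] (N : Subgroup G) [N.Normal]
    (y : SchurH2 (G ⧸ N)) (hy : hopfToCoinv G N y = 1) :
    ∃ x : SchurH2 G, SchurH2map (QuotientGroup.mk' N) x = y := by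
  obtain ⟨w, rfl⟩ := QuotientGroup.mk_surjective y
  have hq : qlift G N w.1 ∈ ⁅N, (⊤ : Subgroup G)⁆ := by
    rw [hopfToCoinv_mk] at hy
    have h := (QuotientGroup.eq_one_iff _).mp hy
    rw [Subgroup.mem_subgroupOf] at h
    simpa [MonoidHom.codRestrict_apply, MonoidHom.domRestrict_apply] using h
  have hcomm : ⁅N, (⊤ : Subgroup G)⁆ = Subgroup.map (freePres G)
      ⁅Subgroup.comap (freePres G) N, (⊤ : Subgroup (FreeGroup G))⁆ := by
    rw [Subgroup.map_commutator,
      Subgroup.map_comap_eq_self_of_surjective (freePres_surjective G),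
      Subgroup.map_top_of_surjective _ (freePres_surjective G)]
  rw [hcomm] at hq
  obtain ⟨u, hu, huq⟩ := Subgroup.mem_map.mp hq
  have hv_ker : (FreeGroup.map (Quotient.out : G ⧸ N → G)) w.1 * u⁻¹ ∈
      (freePres G).ker := by
    have h5 : freePres G ((FreeGroup.map (Quotient.out : G ⧸ N → G)) w.1) =
        qlift G N w.1 := by
      rw [← MonoidHom.comp_apply, freePres_comp_mu]
    rw [MonoidHom.mem_ker, map_mul, map_inv, h5, huq]
    exact mul_inv_cancel _
  have hv_comm : (FreeGroup.map (Quotient.out : G ⧸ N → G)) w.1 * u⁻¹ ∈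
      commutator (FreeGroup G) := by
    refine Subgroup.mul_mem _ ?_ (Subgroup.inv_mem _ ?_)
    · have hle : (commutator (FreeGroup (G ⧸ N))).map
          (FreeGroup.map (Quotient.out : G ⧸ N → G)) ≤ commutator (FreeGroup G) := by
        rw [commutator_def, Subgroup.map_commutator, commutator_def]
        exact Subgroup.commutator_mono le_top le_top
      exact hle (Subgroup.mem_map.mpr ⟨w.1, (Subgroup.mem_inf.mp w.2).2, rfl⟩)
    · rw [commutator_def]
      exact Subgroup.commutator_mono le_top le_top hu
  refine ⟨QuotientGroup.mk ⟨_, Subgroup.mem_inf.mpr ⟨hv_ker, hv_comm⟩⟩, ?_⟩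
  rw [SchurH2map_mk]
  rw [QuotientGroup.eq, Subgroup.mem_subgroupOf]
  simp only [MonoidHom.codRestrict_apply, MonoidHom.domRestrict_apply, Subgroup.coe_mul,
    InvMemClass.coe_inv]
  have hτμ : FreeGroup.map (⇑(QuotientGroup.mk' N))
      ((FreeGroup.map (Quotient.out : G ⧸ N → G)) w.1) = w.1 := by
    rw [← MonoidHom.comp_apply, tau_comp_mu]
    rfl
  rw [map_mul, map_inv, hτμ]
  have hτu : FreeGroup.map (⇑(QuotientGroup.mk' N)) u ∈
      ⁅(freePres (G ⧸ N)).ker, (⊤ : Subgroup (FreeGroup (G ⧸ N)))⁆ := by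
    have hle : (⁅Subgroup.comap (freePres G) N, (⊤ : Subgroup (FreeGroup G))⁆).map
        (FreeGroup.map (⇑(QuotientGroup.mk' N))) ≤
          ⁅(freePres (G ⧸ N)).ker, (⊤ : Subgroup (FreeGroup (G ⧸ N)))⁆ := by
      rw [Subgroup.map_commutator]
      refine Subgroup.commutator_mono ?_ le_top
      rintro y ⟨z, hz, rfl⟩
      rw [MonoidHom.mem_ker, ← MonoidHom.comp_apply, freePres_naturality,
        MonoidHom.comp_apply]
      exact (QuotientGroup.eq_one_iff _).mpr hz
    exact hle (Subgroup.mem_map.mpr ⟨u, hu, rfl⟩)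
  have heq : ((w.1 : FreeGroup (G ⧸ N)) * (FreeGroup.map (⇑(QuotientGroup.mk' N)) u)⁻¹)⁻¹
      * (w.1 : FreeGroup (G ⧸ N)) = FreeGroup.map (⇑(QuotientGroup.mk' N)) u := by group
  rw [heq]
  exact hτu

/-- Exactness of `N/[N,G] → H₁(G) → H₁(G/N)` at `H₁(G)` (plus composite triviality). -/
theorem ab_comp_eq_one {G : Type*} [Group G] (N : Subgroup G) [N.Normal] (y : Coinv G N) :
    Abelianization.map (QuotientGroup.mk' N) (coinvToAb G N y) = 1 := by
  obtain ⟨n, rfl⟩ := QuotientGroup.mk_surjective y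
  show Abelianization.map (QuotientGroup.mk' N) (Abelianization.of ((N.subtype) n)) = 1
  rw [Abelianization.map_of]
  have h : QuotientGroup.mk' N ((N.subtype) n) = 1 := (QuotientGroup.eq_one_iff _).mpr n.2
  rw [h, map_one]

theorem ab_of_surjective {G : Type*} [Group G] :
    Function.Surjective (Abelianization.of (G := G)) :=
  fun x => QuotientGroup.mk_surjective x

theorem ab_exact {G : Type*} [Group G] (N : Subgroup G) [N.Normal] (x : Abelianization G)
    (hx : Abelianization.map (QuotientGroup.mk' N) x = 1) :
    ∃ y : Coinv G N, coinvToAb G N y = x := by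
  obtain ⟨g, rfl⟩ := ab_of_surjective x
  rw [Abelianization.map_of] at hx
  have h1 : QuotientGroup.mk' N g ∈ commutator (G ⧸ N) := (QuotientGroup.eq_one_iff _).mp hx
  have hcomm : commutator (G ⧸ N) =
      Subgroup.map (QuotientGroup.mk' N) (commutator G) := by
    rw [commutator_def, commutator_def, Subgroup.map_commutator,
      Subgroup.map_top_of_surjective _ (QuotientGroup.mk'_surjective N)]
  rw [hcomm] at h1
  obtain ⟨h, hh, hhg⟩ := Subgroup.mem_map.mp h1
  have hn : h⁻¹ * g ∈ N := by
    have h2 : (QuotientGroup.mk h : G ⧸ N) = QuotientGroup.mk g := by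
      have := hhg
      rwa [QuotientGroup.mk'_apply, QuotientGroup.mk'_apply] at this
    exact QuotientGroup.eq.mp h2
  refine ⟨QuotientGroup.mk ⟨h⁻¹ * g, hn⟩, ?_⟩
  have hh1 : Abelianization.of h = 1 := (QuotientGroup.eq_one_iff _).mpr hh
  show Abelianization.of (h⁻¹ * g) = Abelianization.of g
  rw [map_mul, map_inv, hh1, inv_one, one_mul]

end StallingsExact
section StallingsNat

theorem hopf_natural {G₁ G₂ : Type*} [Group G₁] [Group G₂] (f : G₁ →* G₂)
    (N₁ : Subgroup G₁) (N₂ : Subgroup G₂) [N₁.Normal] [N₂.Normal]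
    (hf : N₁ ≤ N₂.comap f) (y : SchurH2 (G₁ ⧸ N₁)) :
    coinvMap f N₁ N₂ (fun n hn => hf hn) (hopfToCoinv G₁ N₁ y) =
      hopfToCoinv G₂ N₂ (SchurH2map (QuotientGroup.map N₁ N₂ f hf) y) := by
  obtain ⟨w, rfl⟩ := QuotientGroup.mk_surjective y
  simp only [hopfToCoinv_mk, coinvMap_mk', SchurH2map_mk]
  rw [QuotientGroup.eq, Subgroup.mem_subgroupOf]
  simp only [MonoidHom.codRestrict_apply, MonoidHom.domRestrict_apply, Subgroup.coe_mul,
    InvMemClass.coe_inv]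
  have hgen : ∀ q : G₁ ⧸ N₁,
      ((f.comp (qlift G₁ N₁)) (FreeGroup.of q))⁻¹ *
        ((qlift G₂ N₂).comp
          (FreeGroup.map (⇑(QuotientGroup.map N₁ N₂ f hf)))) (FreeGroup.of q) ∈ N₂ := by
    intro q
    have e1 : (f.comp (qlift G₁ N₁)) (FreeGroup.of q) = f (Quotient.out q) := by
      simp [qlift]
    have e2 : ((qlift G₂ N₂).comp
        (FreeGroup.map (⇑(QuotientGroup.map N₁ N₂ f hf)))) (FreeGroup.of q) =
        Quotient.out (QuotientGroup.map N₁ N₂ f hf q) := by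
      simp [qlift]
    rw [e1, e2]
    have h3 : (QuotientGroup.mk (f (Quotient.out q)) : G₂ ⧸ N₂) =
        QuotientGroup.mk (Quotient.out (QuotientGroup.map N₁ N₂ f hf q)) := by
      rw [QuotientGroup.out_eq' (QuotientGroup.map N₁ N₂ f hf q)]
      have h4 : (QuotientGroup.mk (f (Quotient.out q)) : G₂ ⧸ N₂) =
          QuotientGroup.map N₁ N₂ f hf (QuotientGroup.mk (Quotient.out q)) :=
        (QuotientGroup.map_mk N₁ N₂ f hf _).symm
      rw [h4, QuotientGroup.out_eq' q]
    exact QuotientGroup.eq.mp h3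
  have key := stallings_agree_mod N₂
      ((qlift G₂ N₂).comp (FreeGroup.map (⇑(QuotientGroup.map N₁ N₂ f hf))))
      (f.comp (qlift G₁ N₁)) hgen w.1 (Subgroup.mem_inf.mp w.2).2
  simpa using key

theorem coinv_natural_ab {G₁ G₂ : Type*} [Group G₁] [Group G₂] (f : G₁ →* G₂)
    (N₁ : Subgroup G₁) (N₂ : Subgroup G₂) [N₁.Normal] [N₂.Normal]
    (hf : ∀ n ∈ N₁, f n ∈ N₂) (y : Coinv G₁ N₁) :
    coinvToAb G₂ N₂ (coinvMap f N₁ N₂ hf y) = Abelianization.map f (coinvToAb G₁ N₁ y) := by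
  obtain ⟨n, rfl⟩ := QuotientGroup.mk_surjective y
  simp only [coinvMap, coinvToAb, QuotientGroup.map_mk, QuotientGroup.lift_mk,
    MonoidHom.comp_apply, MonoidHom.codRestrict_apply, MonoidHom.domRestrict_apply]
  show Abelianization.of (f (n : G₁)) = Abelianization.map f (Abelianization.of (n : G₁))
  rw [Abelianization.map_of]

theorem map_comp_mk' {G₁ G₂ : Type*} [Group G₁] [Group G₂] (f : G₁ →* G₂)
    (N₁ : Subgroup G₁) (N₂ : Subgroup G₂) [N₁.Normal] [N₂.Normal] (hf : N₁ ≤ N₂.comap f) :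
    (QuotientGroup.map N₁ N₂ f hf).comp (QuotientGroup.mk' N₁) =
      (QuotientGroup.mk' N₂).comp f := by
  ext g
  simp [QuotientGroup.map_mk']

theorem SchurH2map_comp_apply {G₁ G₂ G₃ : Type*} [Group G₁] [Group G₂] [Group G₃]
    (f : G₁ →* G₂) (g : G₂ →* G₃) (x : SchurH2 G₁) :
    SchurH2map (g.comp f) x = SchurH2map g (SchurH2map f x) := by
  obtain ⟨v, rfl⟩ := QuotientGroup.mk_surjective x
  simp only [SchurH2map_mk]
  refine congrArg QuotientGroup.mk (Subtype.ext ?_)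
  exact (FreeGroup.map.comp (⇑f) (⇑g) v.1).symm

theorem SchurH2map_id_apply {G : Type*} [Group G] (x : SchurH2 G) :
    SchurH2map (MonoidHom.id G) x = x := by
  obtain ⟨v, rfl⟩ := QuotientGroup.mk_surjective x
  simp only [SchurH2map_mk]
  refine congrArg QuotientGroup.mk (Subtype.ext ?_)
  have hid : ⇑(MonoidHom.id G) = id := rfl
  exact FreeGroup.map.id v.1

theorem schur_bij {G₁ G₂ : Type*} [Group G₁] [Group G₂] {f : G₁ →* G₂}
    (hf : Function.Bijective f) : Function.Bijective (SchurH2map f) := by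
  let e := MulEquiv.ofBijective f hf
  have hfe : f = e.toMonoidHom := by ext x; rfl
  refine Function.bijective_iff_has_inverse.mpr ⟨SchurH2map e.symm.toMonoidHom, ?_, ?_⟩
  · intro x
    rw [hfe, ← SchurH2map_comp_apply]
    have h : (e.symm.toMonoidHom).comp e.toMonoidHom = MonoidHom.id G₁ := by ext y; simp
    rw [h, SchurH2map_id_apply]
  · intro x
    rw [hfe, ← SchurH2map_comp_apply]
    have h : (e.toMonoidHom).comp e.symm.toMonoidHom = MonoidHom.id G₂ := by ext y; simp
    rw [h, SchurH2map_id_apply]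

theorem ab_map_comp_apply {G₁ G₂ G₃ : Type*} [Group G₁] [Group G₂] [Group G₃]
    (f : G₁ →* G₂) (g : G₂ →* G₃) (x : Abelianization G₁) :
    Abelianization.map (g.comp f) x = Abelianization.map g (Abelianization.map f x) := by
  obtain ⟨a, rfl⟩ := ab_of_surjective x
  simp [Abelianization.map_of]

theorem ab_map_id_apply {G : Type*} [Group G] (x : Abelianization G) :
    Abelianization.map (MonoidHom.id G) x = x := by
  obtain ⟨a, rfl⟩ := ab_of_surjective x
  simp [Abelianization.map_of]

theorem ab_bij {G₁ G₂ : Type*} [Group G₁] [Group G₂] {f : G₁ →* G₂}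
    (hf : Function.Bijective f) : Function.Bijective (Abelianization.map f) := by
  let e := MulEquiv.ofBijective f hf
  have hfe : f = e.toMonoidHom := by ext x; rfl
  refine Function.bijective_iff_has_inverse.mpr
    ⟨Abelianization.map e.symm.toMonoidHom, ?_, ?_⟩
  · intro x
    rw [hfe, ← ab_map_comp_apply]
    have h : (e.symm.toMonoidHom).comp e.toMonoidHom = MonoidHom.id G₁ := by ext y; simp
    rw [h, ab_map_id_apply]
  · intro x
    rw [hfe, ← ab_map_comp_apply]
    have h : (e.toMonoidHom).comp e.symm.toMonoidHom = MonoidHom.id G₂ := by ext y; simp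
    rw [h, ab_map_id_apply]

theorem ab_natural {G₁ G₂ : Type*} [Group G₁] [Group G₂] (f : G₁ →* G₂)
    (N₁ : Subgroup G₁) (N₂ : Subgroup G₂) [N₁.Normal] [N₂.Normal] (hf : N₁ ≤ N₂.comap f)
    (x : Abelianization G₁) :
    Abelianization.map (QuotientGroup.map N₁ N₂ f hf)
        (Abelianization.map (QuotientGroup.mk' N₁) x) =
      Abelianization.map (QuotientGroup.mk' N₂) (Abelianization.map f x) := by
  rw [← ab_map_comp_apply, ← ab_map_comp_apply, map_comp_mk']

end StallingsNat
section StallingsChase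

/-- The four/five-lemma diagram chase: under Stallings' hypotheses on `f` and given that
the induced maps on the quotient `G/N` level are bijective, the induced map on
coinvariants `N₁/[N₁,G₁] → N₂/[N₂,G₂]` is bijective. -/
theorem coinv_bij {G₁ G₂ : Type*} [Group G₁] [Group G₂] (f : G₁ →* G₂)
    (N₁ : Subgroup G₁) (N₂ : Subgroup G₂) [N₁.Normal] [N₂.Normal] (hf : N₁ ≤ N₂.comap f)
    (h2 : Function.Surjective (SchurH2map f))
    (h1 : Function.Bijective (Abelianization.map f))
    (hq2 : Function.Bijective (SchurH2map (QuotientGroup.map N₁ N₂ f hf)))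
    (hq1 : Function.Bijective (Abelianization.map (QuotientGroup.map N₁ N₂ f hf))) :
    Function.Bijective (coinvMap f N₁ N₂ (fun n hn => hf hn)) := by
  constructor
  · rw [injective_iff_map_eq_one]
    intro y hy
    have e1 : Abelianization.map f (coinvToAb G₁ N₁ y) = 1 := by
      rw [← coinv_natural_ab f N₁ N₂ (fun n hn => hf hn) y, hy, map_one]
    have e2 : coinvToAb G₁ N₁ y = 1 := h1.injective (by rw [e1, map_one])
    obtain ⟨z, hz⟩ := coinv_exact N₁ y e2
    have e3 : hopfToCoinv G₂ N₂ (SchurH2map (QuotientGroup.map N₁ N₂ f hf) z) = 1 := by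
      rw [← hopf_natural f N₁ N₂ hf z, hz, hy]
    obtain ⟨w, hw⟩ := schur_exact N₂ _ e3
    obtain ⟨v, rfl⟩ := h2 w
    have e4 : SchurH2map (QuotientGroup.map N₁ N₂ f hf)
        (SchurH2map (QuotientGroup.mk' N₁) v) =
        SchurH2map (QuotientGroup.map N₁ N₂ f hf) z := by
      rw [← SchurH2map_comp_apply, map_comp_mk', SchurH2map_comp_apply, hw]
    have e5 : SchurH2map (QuotientGroup.mk' N₁) v = z := hq2.injective e4
    rw [← hz, ← e5]
    exact hopf_comp_eq_one N₁ _
  · intro x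
    obtain ⟨p, hp⟩ := h1.surjective (coinvToAb G₂ N₂ x)
    have e2 : Abelianization.map (QuotientGroup.map N₁ N₂ f hf)
        (Abelianization.map (QuotientGroup.mk' N₁) p) = 1 := by
      rw [ab_natural f N₁ N₂ hf p, hp, ab_comp_eq_one]
    have e3 : Abelianization.map (QuotientGroup.mk' N₁) p = 1 :=
      hq1.injective (by rw [e2, map_one])
    obtain ⟨y, hy⟩ := ab_exact N₁ p e3
    have e4 : coinvToAb G₂ N₂ (coinvMap f N₁ N₂ (fun n hn => hf hn) y) =
        coinvToAb G₂ N₂ x := by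
      rw [coinv_natural_ab f N₁ N₂ (fun n hn => hf hn) y, hy, hp]
    have e5 : coinvToAb G₂ N₂ (x * (coinvMap f N₁ N₂ (fun n hn => hf hn) y)⁻¹) = 1 := by
      rw [map_mul, map_inv, e4]
      simp
    obtain ⟨z₂, hz₂⟩ := coinv_exact N₂ _ e5
    obtain ⟨z₁, rfl⟩ := hq2.surjective z₂
    refine ⟨hopfToCoinv G₁ N₁ z₁ * y, ?_⟩
    rw [map_mul, hopf_natural f N₁ N₂ hf z₁, hz₂]
    group

theorem lcs_succ_comm (G : Type*) [Group G] (n : ℕ) :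
    (⊤ : Subgroup G).lowerCentralSeries (n + 1) = ⁅(⊤ : Subgroup G).lowerCentralSeries n, (⊤ : Subgroup G)⁆ := by
  rw [Subgroup.lowerCentralSeries_succ]

theorem lcs_step {G₁ G₂ : Type*} [Group G₁] [Group G₂] (f : G₁ →* G₂)
    (h1 : Function.Bijective (Abelianization.map f))
    (h2 : Function.Surjective (SchurH2map f))
    (i : ℕ) (ih : Function.Bijective (lcsQuotMap f i)) :
    Function.Bijective (lcsQuotMap f (i + 1)) := by
  have hN : (⊤ : Subgroup G₁).lowerCentralSeries i ≤ Subgroup.comap f ((⊤ : Subgroup G₂).lowerCentralSeries i) :=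
    Subgroup.map_le_iff_le_comap.mp (Subgroup.lowerCentralSeries.map f i)
  have hmap : lcsQuotMap f i =
      QuotientGroup.map ((⊤ : Subgroup G₁).lowerCentralSeries i) ((⊤ : Subgroup G₂).lowerCentralSeries i) f hN := rfl
  have hq2 : Function.Bijective
      (SchurH2map (QuotientGroup.map ((⊤ : Subgroup G₁).lowerCentralSeries i)
        ((⊤ : Subgroup G₂).lowerCentralSeries i) f hN)) := schur_bij (hmap ▸ ih)
  have hq1 : Function.Bijective
      (Abelianization.map (QuotientGroup.map ((⊤ : Subgroup G₁).lowerCentralSeries i)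
        ((⊤ : Subgroup G₂).lowerCentralSeries i) f hN)) := ab_bij (hmap ▸ ih)
  have hψ := coinv_bij f ((⊤ : Subgroup G₁).lowerCentralSeries i) ((⊤ : Subgroup G₂).lowerCentralSeries i) hN h2 h1 hq2 hq1
  constructor
  · rw [injective_iff_map_eq_one]
    intro x hx
    obtain ⟨g, rfl⟩ := QuotientGroup.mk_surjective x
    simp only [lcsQuotMap, QuotientGroup.map_mk] at hx
    have hg2 : f g ∈ (⊤ : Subgroup G₂).lowerCentralSeries (i + 1) := (QuotientGroup.eq_one_iff _).mp hx
    have hg1 : g ∈ (⊤ : Subgroup G₁).lowerCentralSeries i := by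
      have hl : lcsQuotMap f i (QuotientGroup.mk g) = 1 := by
        simp only [lcsQuotMap, QuotientGroup.map_mk]
        exact (QuotientGroup.eq_one_iff _).mpr
          (Subgroup.lowerCentralSeries_antitone _ (Nat.le_succ i) hg2)
      have hg' : (QuotientGroup.mk g : G₁ ⧸ (⊤ : Subgroup G₁).lowerCentralSeries i) = 1 :=
        ih.injective (by rw [hl, map_one])
      exact (QuotientGroup.eq_one_iff _).mp hg'
    have hψ1 : coinvMap f ((⊤ : Subgroup G₁).lowerCentralSeries i) ((⊤ : Subgroup G₂).lowerCentralSeries i)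
        (fun n hn => hN hn) (QuotientGroup.mk ⟨g, hg1⟩) = 1 := by
      rw [coinvMap_mk']
      rw [QuotientGroup.eq_one_iff, Subgroup.mem_subgroupOf]
      rw [← lcs_succ_comm]
      exact hg2
    have hmk : (QuotientGroup.mk (⟨g, hg1⟩ : (⊤ : Subgroup G₁).lowerCentralSeries i) :
        Coinv G₁ ((⊤ : Subgroup G₁).lowerCentralSeries i)) = 1 := hψ.injective (by rw [hψ1, map_one])
    have hg3 := (QuotientGroup.eq_one_iff _).mp hmk
    rw [Subgroup.mem_subgroupOf] at hg3
    exact (QuotientGroup.eq_one_iff _).mpr (by rw [lcs_succ_comm]; exact hg3)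
  · intro x
    obtain ⟨g₂, rfl⟩ := QuotientGroup.mk_surjective x
    obtain ⟨p, hp⟩ := ih.surjective
      (QuotientGroup.mk g₂ : G₂ ⧸ (⊤ : Subgroup G₂).lowerCentralSeries i)
    obtain ⟨g₁, rfl⟩ := QuotientGroup.mk_surjective p
    have hn : (f g₁)⁻¹ * g₂ ∈ (⊤ : Subgroup G₂).lowerCentralSeries i := by
      simp only [lcsQuotMap, QuotientGroup.map_mk] at hp
      exact QuotientGroup.eq.mp hp
    obtain ⟨m, hm⟩ := hψ.surjective (QuotientGroup.mk ⟨(f g₁)⁻¹ * g₂, hn⟩)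
    obtain ⟨m', rfl⟩ := QuotientGroup.mk_surjective m
    have hm2 : (f m'.1)⁻¹ * ((f g₁)⁻¹ * g₂) ∈ (⊤ : Subgroup G₂).lowerCentralSeries (i + 1) := by
      rw [coinvMap_mk'] at hm
      have h := QuotientGroup.eq.mp hm
      rw [Subgroup.mem_subgroupOf] at h
      rw [lcs_succ_comm]
      simpa [MonoidHom.codRestrict_apply, MonoidHom.domRestrict_apply] using h
    refine ⟨QuotientGroup.mk (g₁ * m'.1), ?_⟩
    simp only [lcsQuotMap, QuotientGroup.map_mk]
    rw [QuotientGroup.eq]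
    have hr : (f (g₁ * m'.1))⁻¹ * g₂ = (f m'.1)⁻¹ * ((f g₁)⁻¹ * g₂) := by
      rw [map_mul]; group
    rw [hr]
    exact hm2

end StallingsChase
/-- Stallings' theorem: if `f : G₁ →* G₂` induces an isomorphism on `H₁(-;ℤ)` (the
abelianization) and an epimorphism on `H₂(-;ℤ)` (Hopf's formula), then `f` induces
isomorphisms `G₁/Γ^{i+1}G₁ ≅ G₂/Γ^{i+1}G₂` for all `i ≥ 1`; in particular, if `G₁` and
`G₂` are nilpotent then `f` is an isomorphism.  (Here `lcsQuotMap f i` is the map induced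
on `G/Γ^{i+1}G = G ⧸ (⊤ : Subgroup G).lowerCentralSeries i`.) -/
theorem stmt17 {G₁ G₂ : Type*} [Group G₁] [Group G₂] (f : G₁ →* G₂)
    (h1 : Function.Bijective (Abelianization.map f))
    (h2 : Function.Surjective (SchurH2map f)) :
    (∀ i : ℕ, 1 ≤ i → Function.Bijective (lcsQuotMap f i)) ∧
    (Group.IsNilpotent G₁ → Group.IsNilpotent G₂ → Function.Bijective f) := by
  have main : ∀ i : ℕ, Function.Bijective (lcsQuotMap f i) := by
    intro i
    induction i with
    | zero =>
      haveI hs1 : Subsingleton (G₁ ⧸ (⊤ : Subgroup G₁).lowerCentralSeries 0) := by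
        rw [Subgroup.lowerCentralSeries_zero]
        exact QuotientGroup.subsingleton_quotient_top
      haveI hs2 : Subsingleton (G₂ ⧸ (⊤ : Subgroup G₂).lowerCentralSeries 0) := by
        rw [Subgroup.lowerCentralSeries_zero]
        exact QuotientGroup.subsingleton_quotient_top
      exact ⟨fun a b _ => Subsingleton.elim a b, fun y => ⟨1, Subsingleton.elim _ _⟩⟩
    | succ n ih => exact lcs_step f h1 h2 n ih
  refine ⟨fun i _ => main i, ?_⟩
  intro hn₁ hn₂
  obtain ⟨n₁, hb₁⟩ := Subgroup.nilpotent_iff_lowerCentralSeries.mp hn₁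
  obtain ⟨n₂, hb₂⟩ := Subgroup.nilpotent_iff_lowerCentralSeries.mp hn₂
  have hb₁' : (⊤ : Subgroup G₁).lowerCentralSeries (max n₁ n₂) = ⊥ :=
    le_bot_iff.mp (hb₁ ▸ Subgroup.lowerCentralSeries_antitone _ (le_max_left n₁ n₂))
  have hb₂' : (⊤ : Subgroup G₂).lowerCentralSeries (max n₁ n₂) = ⊥ :=
    le_bot_iff.mp (hb₂ ▸ Subgroup.lowerCentralSeries_antitone _ (le_max_right n₁ n₂))
  have hbij := main (max n₁ n₂)
  constructor
  · rw [injective_iff_map_eq_one]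
    intro a ha
    have hl : lcsQuotMap f (max n₁ n₂) (QuotientGroup.mk a) = 1 := by
      simp only [lcsQuotMap, QuotientGroup.map_mk]
      exact (QuotientGroup.eq_one_iff _).mpr (by rw [ha]; exact Subgroup.one_mem _)
    have h2' : (QuotientGroup.mk a : G₁ ⧸ (⊤ : Subgroup G₁).lowerCentralSeries (max n₁ n₂)) = 1 :=
      hbij.injective (by rw [hl, map_one])
    have hmem := (QuotientGroup.eq_one_iff _).mp h2'
    rw [hb₁'] at hmem
    simpa using hmem
  · intro y
    obtain ⟨p, hp⟩ := hbij.surjective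
      (QuotientGroup.mk y : G₂ ⧸ (⊤ : Subgroup G₂).lowerCentralSeries (max n₁ n₂))
    obtain ⟨a, rfl⟩ := QuotientGroup.mk_surjective p
    refine ⟨a, ?_⟩
    simp only [lcsQuotMap, QuotientGroup.map_mk] at hp
    have h := QuotientGroup.eq.mp hp
    rw [hb₂'] at h
    exact inv_mul_eq_one.mp (Subgroup.mem_bot.mp h)
end
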